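/- If k vectors c_1,…,c_k in R^{m'} are orthonormal and embeddings z_1,…,z_k are unit vectors with z_j·c_j ≥ 1 − ε for all j where ε < 1 − 1/√2, then the Gram matrix of {z_j} is strictly diagonally dominant, hence the z_j are linearly independent and span a k-dimensional subspace (approximate collapse prevention). -/
import Mathlib


open scoped RealInnerProductSpace BigOperators

/-- Approximate collapse prevention: if unit embeddings `z j` are `ε`-close (in cosine
similarity) to orthonormal prototypes `c j`, with `ε ≥ 0` small enough that
`(k−1)(2√(2ε) + 2ε) < 1` (a quantitatively correct version of the `ε < 1 − 1/√2`
threshold), then the Gram matrix of the `z j` is strictly diagonally dominant, the `z j`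
are linearly independent, and they span a `k`-dimensional subspace. -/
theorem approximate_clop_prevents_collapse
    (m' k : ℕ) (hk : k ≤ m') (ε : ℝ) (hε0 : 0 ≤ ε)
    (hε : ((k : ℝ) - 1) * (2 * Real.sqrt (2 * ε) + 2 * ε) < 1)
    (c : Fin k → EuclideanSpace ℝ (Fin m')) (hc : Orthonormal ℝ c)
    (z : Fin k → EuclideanSpace ℝ (Fin m')) (hz : ∀ j, ‖z j‖ = 1)
    (hclose : ∀ j, 1 - ε ≤ ⟪z j, c j⟫) :
    (∀ i : Fin k, ∑ j ∈ Finset.univ \ {i}, |⟪z i, z j⟫| < ⟪z i, z i⟫) ∧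
    LinearIndependent ℝ z ∧
    Module.finrank ℝ (Submodule.span ℝ (Set.range z)) = k := by
  set B : ℝ := 2 * Real.sqrt (2 * ε) + 2 * ε with hBdef
  have hs : 0 ≤ Real.sqrt (2 * ε) := Real.sqrt_nonneg _
  have hBnn : 0 ≤ B := by positivity
  have hcn : ∀ j, ‖c j‖ = 1 := hc.1
  have hd : ∀ j, ‖z j - c j‖ ≤ Real.sqrt (2 * ε) := by
    intro j
    have hn : ‖z j - c j‖ ^ 2 ≤ 2 * ε := by
      have h1 := hclose j
      have hn2 : ‖z j - c j‖ ^ 2 = ‖z j‖ ^ 2 - 2 * ⟪z j, c j⟫ + ‖c j‖ ^ 2 := by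
        rw [norm_sub_sq_real]
      rw [hn2, hz j, hcn j]; nlinarith
    calc ‖z j - c j‖ = Real.sqrt (‖z j - c j‖ ^ 2) := (Real.sqrt_sq (norm_nonneg _)).symm
      _ ≤ Real.sqrt (2 * ε) := Real.sqrt_le_sqrt hn
  have hoff : ∀ i j : Fin k, i ≠ j → |⟪z i, z j⟫| ≤ B := by
    intro i j hij
    have hexp : ⟪z i, z j⟫ =
        ⟪z i - c i, z j - c j⟫ + ⟪z i - c i, c j⟫ + ⟪c i, z j - c j⟫ + ⟪c i, c j⟫ := by
      simp only [inner_sub_left, inner_sub_right]; ring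
    have h0 : ⟪c i, c j⟫ = 0 := hc.2 hij
    have h1 : |⟪z i - c i, z j - c j⟫| ≤ 2 * ε := by
      calc |⟪z i - c i, z j - c j⟫| ≤ ‖z i - c i‖ * ‖z j - c j‖ := abs_real_inner_le_norm _ _
        _ ≤ Real.sqrt (2 * ε) * Real.sqrt (2 * ε) :=
          mul_le_mul (hd i) (hd j) (norm_nonneg _) hs
        _ = 2 * ε := Real.mul_self_sqrt (by positivity)
    have h2 : |⟪z i - c i, c j⟫| ≤ Real.sqrt (2 * ε) := by
      calc |⟪z i - c i, c j⟫| ≤ ‖z i - c i‖ * ‖c j‖ := abs_real_inner_le_norm _ _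
        _ ≤ Real.sqrt (2 * ε) := by rw [hcn j, mul_one]; exact hd i
    have h3 : |⟪c i, z j - c j⟫| ≤ Real.sqrt (2 * ε) := by
      calc |⟪c i, z j - c j⟫| ≤ ‖c i‖ * ‖z j - c j‖ := abs_real_inner_le_norm _ _
        _ ≤ Real.sqrt (2 * ε) := by rw [hcn i, one_mul]; exact hd j
    rw [hexp, h0, add_zero]
    calc |⟪z i - c i, z j - c j⟫ + ⟪z i - c i, c j⟫ + ⟪c i, z j - c j⟫|
        ≤ |⟪z i - c i, z j - c j⟫| + |⟪z i - c i, c j⟫| + |⟪c i, z j - c j⟫| := by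
          exact (abs_add_le _ _).trans (by gcongr; exact abs_add_le _ _)
      _ ≤ 2 * ε + Real.sqrt (2 * ε) + Real.sqrt (2 * ε) := by gcongr
      _ = B := by rw [hBdef]; ring
  have hself : ∀ i, ⟪z i, z i⟫ = 1 := by
    intro i
    rw [real_inner_self_eq_norm_sq, hz i]; norm_num
  have hdiag : ∀ i : Fin k, ∑ j ∈ Finset.univ \ {i}, |⟪z i, z j⟫| < ⟪z i, z i⟫ := by
    intro i
    have hk1 : 1 ≤ k := i.pos
    have hcard : (Finset.univ \ {i} : Finset (Fin k)).card = k - 1 := by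
      rw [Finset.card_sdiff_of_subset (by simp)]; simp
    have hsum : ∑ j ∈ Finset.univ \ {i}, |⟪z i, z j⟫| ≤ ((k : ℝ) - 1) * B := by
      calc ∑ j ∈ Finset.univ \ {i}, |⟪z i, z j⟫|
          ≤ ∑ _j ∈ Finset.univ \ {i}, B := by
            apply Finset.sum_le_sum
            intro j hj
            exact hoff i j fun h => (Finset.mem_sdiff.mp hj).2 (by simp [h])
        _ = ((k - 1 : ℕ) : ℝ) * B := by rw [Finset.sum_const, hcard, nsmul_eq_mul]
        _ = ((k : ℝ) - 1) * B := by rw [Nat.cast_sub hk1]; norm_num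
    rw [hself i]
    exact lt_of_le_of_lt hsum hε
  have hli : LinearIndependent ℝ z := by
    rw [Fintype.linearIndependent_iff]
    intro g hg
    by_contra hne
    push_neg at hne
    obtain ⟨i0, hi0⟩ := hne
    obtain ⟨i, -, hi⟩ := Finset.exists_max_image Finset.univ (fun j => |g j|)
      ⟨i0, Finset.mem_univ i0⟩
    have hgi : 0 < |g i| := lt_of_lt_of_le (abs_pos.mpr hi0) (hi i0 (Finset.mem_univ _))
    have hzero : ⟪z i, ∑ j, g j • z j⟫ = 0 := by rw [hg]; simp
    rw [inner_sum] at hzero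
    simp only [real_inner_smul_right] at hzero
    have hsplit : ∑ j ∈ Finset.univ \ {i}, g j * ⟪z i, z j⟫ + g i * ⟪z i, z i⟫ = 0 := by
      rw [← Finset.sum_eq_sum_sdiff_singleton_add (Finset.mem_univ i)]
      exact hzero
    have hgi_eq : g i = -∑ j ∈ Finset.univ \ {i}, g j * ⟪z i, z j⟫ := by
      rw [hself i] at hsplit; linarith
    have habs : |g i| ≤ |g i| * ∑ j ∈ Finset.univ \ {i}, |⟪z i, z j⟫| := by
      calc |g i| = |∑ j ∈ Finset.univ \ {i}, g j * ⟪z i, z j⟫| := by rw [hgi_eq, abs_neg]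
        _ ≤ ∑ j ∈ Finset.univ \ {i}, |g j * ⟪z i, z j⟫| := Finset.abs_sum_le_sum_abs _ _
        _ ≤ ∑ j ∈ Finset.univ \ {i}, |g i| * |⟪z i, z j⟫| := by
            refine Finset.sum_le_sum fun j hj => ?_
            rw [abs_mul]
            exact mul_le_mul_of_nonneg_right (hi j (Finset.mem_univ _)) (abs_nonneg _)
        _ = |g i| * ∑ j ∈ Finset.univ \ {i}, |⟪z i, z j⟫| := by rw [Finset.mul_sum]
    have hlt : ∑ j ∈ Finset.univ \ {i}, |⟪z i, z j⟫| < 1 := by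
      have := hdiag i; rwa [hself i] at this
    nlinarith
  refine ⟨hdiag, hli, ?_⟩
  rw [finrank_span_eq_card hli, Fintype.card_fin]
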